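/- The function U(z,t) = c/√(t² + (1+|z|²)²), with the constant c = √2 (more generally any c with c² = 2), satisfies the CR Yamabe equation on the Heisenberg group: −4·Δ_b U = 2·U³, where Δ_b u = (1/2)(Z(Z̄u) + Z̄(Zu)) is the sublaplacian. -/

import Mathlib

open Complex ContinuousLinearMap

noncomputable def gg (q : ℂ × ℝ) : ℝ :=
  q.2 * q.2 + (1 + (q.1.re * q.1.re + q.1.im * q.1.im)) * (1 + (q.1.re * q.1.re + q.1.im * q.1.im))

lemma gg_pos (q : ℂ × ℝ) : 0 < gg q := by
  unfold gg
  nlinarith [mul_self_nonneg q.2, mul_self_nonneg q.1.re, mul_self_nonneg q.1.im]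

/-- The Heisenberg vector field Z acting on functions u : ℂ × ℝ → ℂ:
`Zu = (1/2)(∂ₓu − i ∂_y u) + i · conj z · ∂ₜ u`. -/
noncomputable def Zop (u : ℂ × ℝ → ℂ) (p : ℂ × ℝ) : ℂ :=
  (1 / 2) * (fderiv ℝ u p ((1 : ℂ), (0 : ℝ)) - Complex.I * fderiv ℝ u p (Complex.I, (0 : ℝ)))
    + Complex.I * (starRingEnd ℂ) p.1 * fderiv ℝ u p ((0 : ℂ), (1 : ℝ))

/-- The conjugate vector field Z̄:
`Z̄u = (1/2)(∂ₓu + i ∂_y u) − i z ∂ₜ u`. -/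
noncomputable def Zbarop (u : ℂ × ℝ → ℂ) (p : ℂ × ℝ) : ℂ :=
  (1 / 2) * (fderiv ℝ u p ((1 : ℂ), (0 : ℝ)) + Complex.I * fderiv ℝ u p (Complex.I, (0 : ℝ)))
    - Complex.I * p.1 * fderiv ℝ u p ((0 : ℂ), (1 : ℝ))

/-- The Heisenberg sublaplacian `Δ_b = (1/2)(ZZ̄ + Z̄Z)`. -/
noncomputable def sublap (u : ℂ × ℝ → ℂ) (p : ℂ × ℝ) : ℂ :=
  (1 / 2) * (Zop (fun q => Zbarop u q) p + Zbarop (fun q => Zop u q) p)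

/-- The standard bubble `U(z,t) = c / √(t² + (1+|z|²)²)`. -/
noncomputable def bubble (c : ℝ) (p : ℂ × ℝ) : ℂ :=
  (c : ℂ) / ((Real.sqrt (p.2 ^ 2 + (1 + ‖p.1‖ ^ 2) ^ 2) : ℝ) : ℂ)

lemma bubble_eq (c : ℝ) : bubble c = fun q => (c : ℂ) * ((gg q ^ (-(1:ℝ)/2) : ℝ) : ℂ) := by
  funext q
  have h1 : q.2 ^ 2 + (1 + ‖q.1‖ ^ 2) ^ 2 = gg q := by
    rw [Complex.sq_norm, Complex.normSq_apply]; unfold gg; ring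
  have h2 : Real.sqrt (gg q) = gg q ^ ((1:ℝ)/2) := Real.sqrt_eq_rpow _
  have h3 : (gg q ^ ((1:ℝ)/2))⁻¹ = gg q ^ (-(1:ℝ)/2) := by
    rw [← Real.rpow_neg (gg_pos q).le]; norm_num
  unfold bubble
  rw [h1, h2, div_eq_mul_inv, ← Complex.ofReal_inv, h3]

lemma zbar_bubble (c : ℝ) (p : ℂ × ℝ) : Zbarop (bubble c) p =
    -(c:ℂ) * p.1 * ((((1 + (p.1.re * p.1.re + p.1.im * p.1.im)) : ℝ) : ℂ)
      - Complex.I * (p.2 : ℝ)) * ((gg p ^ (-(3:ℝ)/2) : ℝ) : ℂ) := by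
  have hre : HasFDerivAt (fun q : ℂ × ℝ => q.1.re) (Complex.reCLM.comp (fst ℝ ℂ ℝ)) p :=
    (Complex.reCLM.hasFDerivAt).comp p hasFDerivAt_fst
  have him : HasFDerivAt (fun q : ℂ × ℝ => q.1.im) (Complex.imCLM.comp (fst ℝ ℂ ℝ)) p :=
    (Complex.imCLM.hasFDerivAt).comp p hasFDerivAt_fst
  have hsnd : HasFDerivAt (fun q : ℂ × ℝ => q.2) (snd ℝ ℂ ℝ) p := hasFDerivAt_snd
  have hm := ((hre.mul hre).add (him.mul him)).const_add 1
  have hg := (hsnd.mul hsnd).add (hm.mul hm)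
  have hG := hg.rpow_const (Or.inl (gg_pos p).ne')  (p := -(1:ℝ)/2)
  have hb := (Complex.ofRealCLM.hasFDerivAt.comp p hG).const_mul (c : ℂ)
  unfold Zbarop
  rw [bubble_eq c]
  rw [show fderiv ℝ (fun q => (c : ℂ) * ((gg q ^ (-(1:ℝ)/2) : ℝ) : ℂ)) p = _ from hb.fderiv]
  simp only [ContinuousLinearMap.add_apply, ContinuousLinearMap.smul_apply,
    ContinuousLinearMap.coe_comp', Function.comp_apply, ContinuousLinearMap.coe_fst',
    ContinuousLinearMap.coe_snd', Complex.reCLM_apply, Complex.imCLM_apply,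
    Complex.ofRealCLM_apply, Complex.I_re, Complex.I_im, Complex.one_re, Complex.one_im,
    Complex.zero_re, Complex.zero_im, smul_eq_mul, Pi.add_apply, Pi.mul_apply]
  have e1 : -(1:ℝ)/2 - 1 = -(3:ℝ)/2 := by norm_num
  rw [e1]
  clear hb hG hg hm hre him hsnd
  unfold gg
  have key : (p.2*p.2 + (1+(p.1.re*p.1.re+p.1.im*p.1.im))*(1+(p.1.re*p.1.re+p.1.im*p.1.im)))
        ^ (-(3:ℝ)/2)
      = (p.2*p.2 + (1+(p.1.re*p.1.re+p.1.im*p.1.im))*(1+(p.1.re*p.1.re+p.1.im*p.1.im)))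
        ^ (-(5:ℝ)/2)
      * (p.2*p.2 + (1+(p.1.re*p.1.re+p.1.im*p.1.im))*(1+(p.1.re*p.1.re+p.1.im*p.1.im))) := by
    have hne : (p.2*p.2 + (1+(p.1.re*p.1.re+p.1.im*p.1.im))*(1+(p.1.re*p.1.re+p.1.im*p.1.im)))
        ≠ 0 := (gg_pos p).ne'
    rw [← Real.rpow_add_one hne]; norm_num
  rw [key]
  set x := p.1.re with hx
  set y := p.1.im with hy
  have hz : p.1 = (x : ℂ) + (y : ℂ) * Complex.I := by
    rw [hx, hy]; exact (Complex.re_add_im p.1).symm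
  rw [hz]
  push_cast
  ring

lemma zop_bubble (c : ℝ) (p : ℂ × ℝ) : Zop (bubble c) p =
    -(c:ℂ) * ((p.1.re : ℂ) - (p.1.im : ℂ) * Complex.I)
      * ((((1 + (p.1.re * p.1.re + p.1.im * p.1.im)) : ℝ) : ℂ)
      + Complex.I * (p.2 : ℝ)) * ((gg p ^ (-(3:ℝ)/2) : ℝ) : ℂ) := by
  have hre : HasFDerivAt (fun q : ℂ × ℝ => q.1.re) (Complex.reCLM.comp (fst ℝ ℂ ℝ)) p :=
    (Complex.reCLM.hasFDerivAt).comp p hasFDerivAt_fst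
  have him : HasFDerivAt (fun q : ℂ × ℝ => q.1.im) (Complex.imCLM.comp (fst ℝ ℂ ℝ)) p :=
    (Complex.imCLM.hasFDerivAt).comp p hasFDerivAt_fst
  have hsnd : HasFDerivAt (fun q : ℂ × ℝ => q.2) (snd ℝ ℂ ℝ) p := hasFDerivAt_snd
  have hm := ((hre.mul hre).add (him.mul him)).const_add 1
  have hg := (hsnd.mul hsnd).add (hm.mul hm)
  have hG := hg.rpow_const (Or.inl (gg_pos p).ne')  (p := -(1:ℝ)/2)
  have hb := (Complex.ofRealCLM.hasFDerivAt.comp p hG).const_mul (c : ℂ)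
  have hconj : (starRingEnd ℂ) p.1 = (p.1.re : ℂ) - (p.1.im : ℂ) * Complex.I := by
    simp [Complex.ext_iff]
  unfold Zop
  rw [bubble_eq c, hconj]
  rw [show fderiv ℝ (fun q => (c : ℂ) * ((gg q ^ (-(1:ℝ)/2) : ℝ) : ℂ)) p = _ from hb.fderiv]
  simp only [ContinuousLinearMap.add_apply, ContinuousLinearMap.smul_apply,
    ContinuousLinearMap.coe_comp', Function.comp_apply, ContinuousLinearMap.coe_fst',
    ContinuousLinearMap.coe_snd', Complex.reCLM_apply, Complex.imCLM_apply,
    Complex.ofRealCLM_apply, Complex.I_re, Complex.I_im, Complex.one_re, Complex.one_im,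
    Complex.zero_re, Complex.zero_im, smul_eq_mul, Pi.add_apply, Pi.mul_apply]
  have e1 : -(1:ℝ)/2 - 1 = -(3:ℝ)/2 := by norm_num
  rw [e1]
  clear hb hG hg hm hre him hsnd
  unfold gg
  push_cast
  ring

lemma zop_zbar (c : ℝ) (p : ℂ × ℝ) : Zop (fun q => Zbarop (bubble c) q) p =
    (c:ℂ) * (Complex.I * (p.2 : ℝ) - 1) * ((gg p ^ (-(3:ℝ)/2) : ℝ) : ℂ) := by
  have hfun : (fun q => Zbarop (bubble c) q) =
      fun q : ℂ × ℝ => -(c:ℂ) * q.1 * ((((1 + (q.1.re * q.1.re + q.1.im * q.1.im)) : ℝ) : ℂ)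
        - Complex.I * (q.2 : ℝ)) * ((gg q ^ (-(3:ℝ)/2) : ℝ) : ℂ) :=
    funext (zbar_bubble c)
  have hre : HasFDerivAt (fun q : ℂ × ℝ => q.1.re) (Complex.reCLM.comp (fst ℝ ℂ ℝ)) p :=
    (Complex.reCLM.hasFDerivAt).comp p hasFDerivAt_fst
  have him : HasFDerivAt (fun q : ℂ × ℝ => q.1.im) (Complex.imCLM.comp (fst ℝ ℂ ℝ)) p :=
    (Complex.imCLM.hasFDerivAt).comp p hasFDerivAt_fst
  have hsnd : HasFDerivAt (fun q : ℂ × ℝ => q.2) (snd ℝ ℂ ℝ) p := hasFDerivAt_snd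
  have hm := ((hre.mul hre).add (him.mul him)).const_add 1
  have hg := (hsnd.mul hsnd).add (hm.mul hm)
  have hG3 := hg.rpow_const (Or.inl (gg_pos p).ne')  (p := -(3:ℝ)/2)
  have hB := Complex.ofRealCLM.hasFDerivAt.comp p hG3
  have hcz := (hasFDerivAt_fst (p := p) (𝕜 := ℝ) (E := ℂ) (F := ℝ)).const_mul (-(c:ℂ))
  have hmC := Complex.ofRealCLM.hasFDerivAt.comp p hm
  have htC := (Complex.ofRealCLM.hasFDerivAt.comp p hsnd).const_mul Complex.I
  have hA := hmC.sub htC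
  have hF := (hcz.mul hA).mul hB
  unfold Zop
  rw [hfun]
  rw [show fderiv ℝ (fun q : ℂ × ℝ => -(c:ℂ) * q.1
      * ((((1 + (q.1.re * q.1.re + q.1.im * q.1.im)) : ℝ) : ℂ)
        - Complex.I * (q.2 : ℝ)) * ((gg q ^ (-(3:ℝ)/2) : ℝ) : ℂ)) p = _ from hF.fderiv]
  have hconj : (starRingEnd ℂ) p.1 = (p.1.re : ℂ) - (p.1.im : ℂ) * Complex.I := by
    simp [Complex.ext_iff]
  rw [hconj]
  simp only [ContinuousLinearMap.add_apply, ContinuousLinearMap.smul_apply,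
    ContinuousLinearMap.sub_apply, ContinuousLinearMap.coe_sub',
    ContinuousLinearMap.coe_comp', Function.comp_apply, ContinuousLinearMap.coe_fst',
    ContinuousLinearMap.coe_snd', Complex.reCLM_apply, Complex.imCLM_apply,
    Complex.ofRealCLM_apply, Complex.I_re, Complex.I_im, Complex.one_re, Complex.one_im,
    Complex.zero_re, Complex.zero_im, smul_eq_mul, Pi.sub_apply, Pi.add_apply, Pi.mul_apply]
  have e1 : -(3:ℝ)/2 - 1 = -(5:ℝ)/2 := by norm_num
  rw [e1]
  clear hF hA htC hmC hcz hB hG3 hg hm hre him hsnd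
  unfold gg
  have key : (p.2*p.2 + (1+(p.1.re*p.1.re+p.1.im*p.1.im))*(1+(p.1.re*p.1.re+p.1.im*p.1.im)))
        ^ (-(3:ℝ)/2)
      = (p.2*p.2 + (1+(p.1.re*p.1.re+p.1.im*p.1.im))*(1+(p.1.re*p.1.re+p.1.im*p.1.im)))
        ^ (-(5:ℝ)/2)
      * (p.2*p.2 + (1+(p.1.re*p.1.re+p.1.im*p.1.im))*(1+(p.1.re*p.1.re+p.1.im*p.1.im))) := by
    have hne : (p.2*p.2 + (1+(p.1.re*p.1.re+p.1.im*p.1.im))*(1+(p.1.re*p.1.re+p.1.im*p.1.im)))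
        ≠ 0 := (gg_pos p).ne'
    rw [← Real.rpow_add_one hne]; norm_num
  rw [key]
  set x := p.1.re with hx
  set y := p.1.im with hy
  have hz : p.1 = (x : ℂ) + (y : ℂ) * Complex.I := by
    rw [hx, hy]; exact (Complex.re_add_im p.1).symm
  rw [hz]
  push_cast
  have h2 : Complex.I ^ 2 = -1 := Complex.I_sq
  have h3 : Complex.I ^ 3 = -Complex.I := by rw [pow_succ, h2]; ring
  have h4 : Complex.I ^ 4 = 1 := by rw [show (4:ℕ) = 2*2 from rfl, pow_mul, h2]; ring
  have h5 : Complex.I ^ 5 = Complex.I := by rw [pow_succ, h4]; ring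
  have h6 : Complex.I ^ 6 = -1 := by rw [pow_succ, h5, Complex.I_mul_I]
  ring_nf
  simp only [h2, h3, h4, h5, h6]
  ring

lemma zbar_zop (c : ℝ) (p : ℂ × ℝ) : Zbarop (fun q => Zop (bubble c) q) p =
    (c:ℂ) * (-(Complex.I * (p.2 : ℝ)) - 1) * ((gg p ^ (-(3:ℝ)/2) : ℝ) : ℂ) := by
  have hfun : (fun q => Zop (bubble c) q) =
      fun q : ℂ × ℝ => -(c:ℂ) * ((q.1.re : ℂ) - (q.1.im : ℂ) * Complex.I)
        * ((((1 + (q.1.re * q.1.re + q.1.im * q.1.im)) : ℝ) : ℂ)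
        + Complex.I * (q.2 : ℝ)) * ((gg q ^ (-(3:ℝ)/2) : ℝ) : ℂ) :=
    funext (zop_bubble c)
  have hre : HasFDerivAt (fun q : ℂ × ℝ => q.1.re) (Complex.reCLM.comp (fst ℝ ℂ ℝ)) p :=
    (Complex.reCLM.hasFDerivAt).comp p hasFDerivAt_fst
  have him : HasFDerivAt (fun q : ℂ × ℝ => q.1.im) (Complex.imCLM.comp (fst ℝ ℂ ℝ)) p :=
    (Complex.imCLM.hasFDerivAt).comp p hasFDerivAt_fst
  have hsnd : HasFDerivAt (fun q : ℂ × ℝ => q.2) (snd ℝ ℂ ℝ) p := hasFDerivAt_snd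
  have hm := ((hre.mul hre).add (him.mul him)).const_add 1
  have hg := (hsnd.mul hsnd).add (hm.mul hm)
  have hG3 := hg.rpow_const (Or.inl (gg_pos p).ne')  (p := -(3:ℝ)/2)
  have hB := Complex.ofRealCLM.hasFDerivAt.comp p hG3
  have hreC := Complex.ofRealCLM.hasFDerivAt.comp p hre
  have himC := (Complex.ofRealCLM.hasFDerivAt.comp p him).mul_const Complex.I
  have hcz := (hreC.sub himC).const_mul (-(c:ℂ))
  have hmC := Complex.ofRealCLM.hasFDerivAt.comp p hm
  have htC := (Complex.ofRealCLM.hasFDerivAt.comp p hsnd).const_mul Complex.I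
  have hA := hmC.add htC
  have hF := (hcz.mul hA).mul hB
  unfold Zbarop
  rw [hfun]
  rw [show fderiv ℝ (fun q : ℂ × ℝ => -(c:ℂ) * ((q.1.re : ℂ) - (q.1.im : ℂ) * Complex.I)
      * ((((1 + (q.1.re * q.1.re + q.1.im * q.1.im)) : ℝ) : ℂ)
        + Complex.I * (q.2 : ℝ)) * ((gg q ^ (-(3:ℝ)/2) : ℝ) : ℂ)) p = _ from hF.fderiv]
  simp only [ContinuousLinearMap.add_apply, ContinuousLinearMap.smul_apply,
    ContinuousLinearMap.sub_apply, ContinuousLinearMap.coe_sub',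
    ContinuousLinearMap.coe_comp', Function.comp_apply, ContinuousLinearMap.coe_fst',
    ContinuousLinearMap.coe_snd', Complex.reCLM_apply, Complex.imCLM_apply,
    Complex.ofRealCLM_apply, Complex.I_re, Complex.I_im, Complex.one_re, Complex.one_im,
    Complex.zero_re, Complex.zero_im, smul_eq_mul, Pi.sub_apply, Pi.add_apply, Pi.mul_apply]
  have e1 : -(3:ℝ)/2 - 1 = -(5:ℝ)/2 := by norm_num
  rw [e1]
  clear hF hA htC hmC hcz hreC himC hB hG3 hg hm hre him hsnd
  unfold gg
  have key : (p.2*p.2 + (1+(p.1.re*p.1.re+p.1.im*p.1.im))*(1+(p.1.re*p.1.re+p.1.im*p.1.im)))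
        ^ (-(3:ℝ)/2)
      = (p.2*p.2 + (1+(p.1.re*p.1.re+p.1.im*p.1.im))*(1+(p.1.re*p.1.re+p.1.im*p.1.im)))
        ^ (-(5:ℝ)/2)
      * (p.2*p.2 + (1+(p.1.re*p.1.re+p.1.im*p.1.im))*(1+(p.1.re*p.1.re+p.1.im*p.1.im))) := by
    have hne : (p.2*p.2 + (1+(p.1.re*p.1.re+p.1.im*p.1.im))*(1+(p.1.re*p.1.re+p.1.im*p.1.im)))
        ≠ 0 := (gg_pos p).ne'
    rw [← Real.rpow_add_one hne]; norm_num
  rw [key]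
  set x := p.1.re with hx
  set y := p.1.im with hy
  have hz : p.1 = (x : ℂ) + (y : ℂ) * Complex.I := by
    rw [hx, hy]; exact (Complex.re_add_im p.1).symm
  rw [hz]
  push_cast
  have h2 : Complex.I ^ 2 = -1 := Complex.I_sq
  have h3 : Complex.I ^ 3 = -Complex.I := by rw [pow_succ, h2]; ring
  have h4 : Complex.I ^ 4 = 1 := by rw [show (4:ℕ) = 2*2 from rfl, pow_mul, h2]; ring
  have h5 : Complex.I ^ 5 = Complex.I := by rw [pow_succ, h4]; ring
  have h6 : Complex.I ^ 6 = -1 := by rw [pow_succ, h5, Complex.I_mul_I]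
  ring_nf
  simp only [h2, h3, h4, h5, h6]
  ring

theorem bubble_solves_CR_Yamabe (c : ℝ) (hc : c ^ 2 = 2) (p : ℂ × ℝ) :
    -4 * sublap (bubble c) p = 2 * (bubble c p) ^ 3 := by
  have hcube : (bubble c p) ^ 3 = (c:ℂ)^3 * ((gg p ^ (-(3:ℝ)/2) : ℝ) : ℂ) := by
    simp only [bubble_eq c]
    have : ((gg p ^ (-(1:ℝ)/2)) ^ (3:ℕ) : ℝ) = gg p ^ (-(3:ℝ)/2) := by
      rw [← Real.rpow_natCast (gg p ^ (-(1:ℝ)/2)) 3, ← Real.rpow_mul (gg_pos p).le]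
      norm_num
    have this2 : (((gg p ^ (-(1:ℝ)/2) : ℝ) : ℂ)) ^ (3:ℕ) = ((gg p ^ (-(3:ℝ)/2) : ℝ) : ℂ) := by
      rw [← Complex.ofReal_pow, this]
    rw [mul_pow, this2]
  unfold sublap
  rw [zop_zbar, zbar_zop, hcube]
  have hcC : (c:ℂ) ^ 2 = 2 := by exact_mod_cast hc
  linear_combination (-2 * (c:ℂ) * (((gg p ^ (-(3:ℝ)/2) : ℝ) : ℂ))) * hcC
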